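/- For every positive integer m there exists ε₀ > 0 such that for every δ with 0 < δ < ε₀ and every k ∈ {1, …, m}: (K + (0, 0, −δ)) ∩ (K + (w₊(k) + w₊(k+1) − u₁)) = {x + (0, 0, −δ) : x ∈ segment [w₊(k), w₊(k+1)]}; that is, the translate A of K by (0,0,−δ) meets the translate C_k exactly in the translated edge E_k + (0,0,−δ). -/

import Mathlib

open Pointwise

/-- `w₋(j) = (0, −∑_{t=1}^{j} 1/t², ∑_{t=1}^{j} 1/t³)`. -/
noncomputable def wM (j : ℕ) : Fin 3 → ℝ :=
  ![0, -(∑ t ∈ Finset.Icc 1 j, (1 : ℝ) / (t : ℝ) ^ 2),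
    ∑ t ∈ Finset.Icc 1 j, (1 : ℝ) / (t : ℝ) ^ 3]

/-- `w₊(k) = (∑_{t=1}^{k} 1/t², ∑_{t=1}^{k} 1/t³, 0)`. -/
noncomputable def wP (k : ℕ) : Fin 3 → ℝ :=
  ![∑ t ∈ Finset.Icc 1 k, (1 : ℝ) / (t : ℝ) ^ 2,
    ∑ t ∈ Finset.Icc 1 k, (1 : ℝ) / (t : ℝ) ^ 3, 0]

/-- `ζ₂ = ∑_{t=1}^{∞} 1/t²`. -/
noncomputable def zeta2 : ℝ := ∑' t : ℕ, (1 : ℝ) / ((t : ℝ) + 1) ^ 2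

/-- `ζ₃ = ∑_{t=1}^{∞} 1/t³`. -/
noncomputable def zeta3 : ℝ := ∑' t : ℕ, (1 : ℝ) / ((t : ℝ) + 1) ^ 3

/-- `u₁ = (ζ₂, −2, ζ₃)`. -/
noncomputable def uOne : Fin 3 → ℝ := ![zeta2, -2, zeta3]

/-- `u₀ = (ζ₂, −2, 0)`. -/
noncomputable def uZero : Fin 3 → ℝ := ![zeta2, -2, 0]

/-- `v(j,k) = (1/(j+1)³)·w(j,k) + (((j+1)³ − 1)/(j+1)³)·w(j,k+1)` where
`w(j,k) = w₋(j) + w₊(k)`. -/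
noncomputable def vU (j k : ℕ) : Fin 3 → ℝ :=
  ((1 : ℝ) / ((j : ℝ) + 1) ^ 3) • (wM j + wP k) +
    ((((j : ℝ) + 1) ^ 3 - 1) / ((j : ℝ) + 1) ^ 3) • (wM j + wP (k + 1))

/-- The universal convex body `K`: the closure of the convex hull of the points
`w₋(j)`, `v(j,k)`, `u₀ − w₊(k)` and `u₁ − w₊(k)`. -/
noncomputable def KU : Set (Fin 3 → ℝ) :=
  closure (convexHull ℝ
    (Set.range wM ∪ (⋃ j : ℕ, Set.range (vU j)) ∪
     Set.range (fun k => uZero - wP k) ∪ Set.range (fun k => uOne - wP k)))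


noncomputable def S2 (l : ℕ) : ℝ := ∑ t ∈ Finset.Icc 1 l, (1 : ℝ) / (t : ℝ) ^ 2
noncomputable def S3 (l : ℕ) : ℝ := ∑ t ∈ Finset.Icc 1 l, (1 : ℝ) / (t : ℝ) ^ 3

lemma S2_zero : S2 0 = 0 := by simp [S2]

lemma S3_zero : S3 0 = 0 := by simp [S3]

lemma S2_succ (l : ℕ) : S2 (l + 1) = S2 l + 1 / ((l : ℝ) + 1) ^ 2 := by
  unfold S2
  rw [Finset.sum_Icc_succ_top (by omega)]
  push_cast; ring

lemma S3_succ (l : ℕ) : S3 (l + 1) = S3 l + 1 / ((l : ℝ) + 1) ^ 3 := by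
  unfold S3
  rw [Finset.sum_Icc_succ_top (by omega)]
  push_cast; ring

lemma S2_nonneg (l : ℕ) : 0 ≤ S2 l := by
  apply Finset.sum_nonneg; intro t ht; positivity

lemma S3_nonneg (l : ℕ) : 0 ≤ S3 l := by
  apply Finset.sum_nonneg; intro t ht; positivity

lemma S3_le_S2 (l : ℕ) : S3 l ≤ S2 l := by
  apply Finset.sum_le_sum
  intro t ht
  have h1 : 1 ≤ t := (Finset.mem_Icc.mp ht).1
  have h1' : (1 : ℝ) ≤ (t : ℝ) := by exact_mod_cast h1
  have : (t : ℝ) ^ 2 ≤ (t : ℝ) ^ 3 := by nlinarith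
  apply one_div_le_one_div_of_le (by positivity) this

lemma one_le_S3 (l : ℕ) (hl : 1 ≤ l) : 1 ≤ S3 l := by
  induction l with
  | zero => omega
  | succ n ih =>
    rcases Nat.eq_zero_or_pos n with h | h
    · subst h; simp [S3_succ, S3_zero]
    · have := ih h
      have : (0:ℝ) < 1 / ((n:ℝ)+1)^3 := by positivity
      rw [S3_succ]; linarith [ih h]

lemma summable2 : Summable (fun t : ℕ => (1 : ℝ) / ((t : ℝ) + 1) ^ 2) := by
  have h : Summable (fun n : ℕ => (1 : ℝ) / (n : ℝ) ^ 2) :=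
    Real.summable_one_div_nat_pow.mpr one_lt_two
  have := (summable_nat_add_iff 1).mpr h
  refine this.congr ?_
  intro n; push_cast; ring

lemma summable3 : Summable (fun t : ℕ => (1 : ℝ) / ((t : ℝ) + 1) ^ 3) := by
  have h : Summable (fun n : ℕ => (1 : ℝ) / (n : ℝ) ^ 3) :=
    Real.summable_one_div_nat_pow.mpr (by norm_num)
  have := (summable_nat_add_iff 1).mpr h
  refine this.congr ?_
  intro n; push_cast; ring

lemma S2_eq_range (l : ℕ) : S2 l = ∑ t ∈ Finset.range l, (1 : ℝ) / ((t : ℝ) + 1) ^ 2 := by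
  unfold S2
  rw [← Finset.Ico_add_one_right_eq_Icc, Finset.sum_Ico_eq_sum_range]
  apply Finset.sum_congr rfl
  intro t _; push_cast; ring_nf

lemma S3_eq_range (l : ℕ) : S3 l = ∑ t ∈ Finset.range l, (1 : ℝ) / ((t : ℝ) + 1) ^ 3 := by
  unfold S3
  rw [← Finset.Ico_add_one_right_eq_Icc, Finset.sum_Ico_eq_sum_range]
  apply Finset.sum_congr rfl
  intro t _; push_cast; ring_nf

lemma S2_le_zeta2 (l : ℕ) : S2 l ≤ zeta2 := by
  rw [S2_eq_range]
  exact Summable.sum_le_tsum _ (fun t _ => by positivity) summable2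

lemma S3_le_zeta3 (l : ℕ) : S3 l ≤ zeta3 := by
  rw [S3_eq_range]
  exact Summable.sum_le_tsum _ (fun t _ => by positivity) summable3

lemma zeta2_nonneg : 0 ≤ zeta2 := by
  have := S2_le_zeta2 0; rw [S2_zero] at this; linarith

lemma one_le_zeta3 : 1 ≤ zeta3 := by
  have := S3_le_zeta3 1
  have h1 : S3 1 = 1 := by rw [show (1:ℕ) = 0 + 1 from rfl, S3_succ, S3_zero]; norm_num
  linarith

lemma zeta3_pos : 0 < zeta3 := lt_of_lt_of_le one_pos one_le_zeta3

lemma sum_range_le (n : ℕ) : ∑ t ∈ Finset.range (n+1), (1 : ℝ) / ((t : ℝ) + 1) ^ 2 ≤ 2 - 1 / ((n:ℝ)+1) := by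
  induction n with
  | zero => norm_num
  | succ n ih =>
    rw [Finset.sum_range_succ]
    have h1 : (1:ℝ) / ((n:ℝ)+1+1)^2 ≤ 1/((n:ℝ)+1) - 1/((n:ℝ)+1+1) := by
      rw [div_sub_div _ _ (by positivity) (by positivity)]
      rw [div_le_div_iff₀ (by positivity) (by positivity)]
      push_cast; ring_nf; nlinarith [sq_nonneg ((n:ℝ)+1)]
    push_cast
    push_cast at ih
    linarith

lemma zeta2_le_two : zeta2 ≤ 2 := by
  apply Real.tsum_le_of_sum_range_le (fun t => by positivity)
  intro n
  cases n with
  | zero => simp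
  | succ n =>
    have := sum_range_le n
    have h : (0:ℝ) < 1/((n:ℝ)+1) := by positivity
    linarith

lemma zeta3_le_zeta2 : zeta3 ≤ zeta2 := by
  apply Summable.tsum_le_tsum _ summable3 summable2
  intro t
  have h1 : (1:ℝ) ≤ (t:ℝ) + 1 := by linarith [Nat.cast_nonneg (α := ℝ) t]
  have : ((t:ℝ)+1)^2 ≤ ((t:ℝ)+1)^3 := by nlinarith
  apply one_div_le_one_div_of_le (by positivity) this

noncomputable def hfun (κ l : ℕ) : ℝ := S2 l - ((κ : ℝ) + 1) * S3 l

lemma hfun_zero (κ : ℕ) : hfun κ 0 = 0 := by simp [hfun, S2_zero, S3_zero]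

lemma hfun_succ (κ l : ℕ) :
    hfun κ (l + 1) = hfun κ l + ((l : ℝ) - κ) / ((l : ℝ) + 1) ^ 3 := by
  unfold hfun
  rw [S2_succ, S3_succ]
  have h : ((l : ℝ) + 1) ≠ 0 := by positivity
  field_simp
  ring

lemma hfun_tie (κ : ℕ) : hfun κ (κ + 1) = hfun κ κ := by
  rw [hfun_succ]; simp

lemma hfun_min_ge (κ d : ℕ) : hfun κ κ ≤ hfun κ (κ + d) := by
  induction d with
  | zero => simp
  | succ d ih =>
    rw [show κ + (d+1) = (κ + d) + 1 from rfl, hfun_succ]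
    have h : (0:ℝ) ≤ ((κ + d : ℕ) : ℝ) - κ := by push_cast; linarith [Nat.cast_nonneg (α := ℝ) d]
    have h2 : (0:ℝ) ≤ (((κ + d : ℕ) : ℝ) - κ) / (((κ + d : ℕ) : ℝ) + 1) ^ 3 := by
      apply div_nonneg h; positivity
    linarith

lemma hfun_min_le (κ n : ℕ) : hfun κ κ ≤ hfun κ (κ - n) := by
  induction n with
  | zero => simp
  | succ n ih =>
    rcases le_or_gt κ n with h | h
    · rw [show κ - (n+1) = κ - n from by omega]; exact ih
    · have hlt : κ - (n+1) < κ := by omega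
      have heq : κ - n = (κ - (n+1)) + 1 := by omega
      rw [heq] at ih
      rw [hfun_succ] at ih
      set l := κ - (n+1)
      have h2 : ((l : ℝ) - κ) / ((l : ℝ) + 1) ^ 3 ≤ 0 := by
        apply div_nonpos_of_nonpos_of_nonneg
        · have : (l:ℝ) ≤ (κ:ℝ) := by exact_mod_cast hlt.le
          linarith
        · positivity
      linarith

lemma hfun_min (κ l : ℕ) : hfun κ κ ≤ hfun κ l := by
  rcases le_or_gt κ l with h | h
  · have := hfun_min_ge κ (l - κ); rwa [show κ + (l - κ) = l from by omega] at this
  · have := hfun_min_le κ (κ - l); rwa [show κ - (κ - l) = l from by omega] at this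

lemma hfun_nonpos_self (κ : ℕ) : hfun κ κ ≤ 0 := by
  have := hfun_min κ 0; rwa [hfun_zero] at this

lemma hfun_nonpos (k l : ℕ) (hk : 1 ≤ k) : hfun k l ≤ 0 := by
  rcases Nat.eq_zero_or_pos l with h | h
  · subst h; rw [hfun_zero]
  · have h1 : S2 l ≤ 2 := le_trans (S2_le_zeta2 l) zeta2_le_two
    have h2 : 1 ≤ S3 l := one_le_S3 l h
    have h3 : (2:ℝ) ≤ (k:ℝ) + 1 := by
      have : (1:ℝ) ≤ (k:ℝ) := by exact_mod_cast hk
      linarith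
    have h4 : (2:ℝ) * 1 ≤ ((k:ℝ)+1) * S3 l := by
      apply mul_le_mul h3 h2 (by norm_num) (by linarith)
    unfold hfun; linarith

-- coordinate lemmas
lemma wM0 (j : ℕ) : wM j 0 = 0 := rfl
lemma wM1 (j : ℕ) : wM j 1 = -S2 j := rfl
lemma wM2 (j : ℕ) : wM j 2 = S3 j := rfl
lemma wP0 (l : ℕ) : wP l 0 = S2 l := rfl
lemma wP1 (l : ℕ) : wP l 1 = S3 l := rfl
lemma wP2 (l : ℕ) : wP l 2 = 0 := rfl
lemma uZero0 : uZero 0 = zeta2 := rfl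
lemma uZero1 : uZero 1 = -2 := rfl
lemma uZero2 : uZero 2 = 0 := rfl
lemma uOne0 : uOne 0 = zeta2 := rfl
lemma uOne1 : uOne 1 = -2 := rfl
lemma uOne2 : uOne 2 = zeta3 := rfl

lemma vU_apply (j l : ℕ) (i : Fin 3) :
    vU j l i = (1 / ((j:ℝ)+1)^3) * (wM j i + wP l i)
      + ((((j:ℝ)+1)^3 - 1) / ((j:ℝ)+1)^3) * (wM j i + wP (l+1) i) := rfl

lemma KU_halfspace (α β γ c : ℝ)
    (hwM : ∀ j : ℕ, c ≤ α * wM j 0 + β * wM j 1 + γ * wM j 2)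
    (hvU : ∀ j l : ℕ, c ≤ α * vU j l 0 + β * vU j l 1 + γ * vU j l 2)
    (hu0 : ∀ l : ℕ, c ≤ α * (uZero - wP l) 0 + β * (uZero - wP l) 1 + γ * (uZero - wP l) 2)
    (hu1 : ∀ l : ℕ, c ≤ α * (uOne - wP l) 0 + β * (uOne - wP l) 1 + γ * (uOne - wP l) 2) :
    ∀ x ∈ KU, c ≤ α * x 0 + β * x 1 + γ * x 2 := by
  intro x hx
  set f : (Fin 3 → ℝ) → ℝ := fun y => α * y 0 + β * y 1 + γ * y 2 with hf
  have hconv : Convex ℝ {y : Fin 3 → ℝ | c ≤ f y} := by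
    intro y hy z hz a b ha hb hab
    simp only [Set.mem_setOf_eq, hf] at hy hz ⊢
    simp only [Pi.add_apply, Pi.smul_apply, smul_eq_mul]
    have e : α * (a * y 0 + b * z 0) + β * (a * y 1 + b * z 1) + γ * (a * y 2 + b * z 2)
        = a * (α * y 0 + β * y 1 + γ * y 2) + b * (α * z 0 + β * z 1 + γ * z 2) := by ring
    have h3 : a * c + b * c = c := by rw [← add_mul, hab, one_mul]
    linarith [e, mul_le_mul_of_nonneg_left hy ha, mul_le_mul_of_nonneg_left hz hb, h3]
  have hclosed : IsClosed {y : Fin 3 → ℝ | c ≤ f y} := by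
    apply isClosed_le continuous_const
    exact ((continuous_const.mul (continuous_apply 0)).add
      (continuous_const.mul (continuous_apply 1))).add
      (continuous_const.mul (continuous_apply 2))
  have hsub : (Set.range wM ∪ (⋃ j : ℕ, Set.range (vU j)) ∪
      Set.range (fun k => uZero - wP k) ∪ Set.range (fun k => uOne - wP k)) ⊆
      {y : Fin 3 → ℝ | c ≤ f y} := by
    rintro s (((⟨j, rfl⟩ | hs) | ⟨l, rfl⟩) | ⟨l, rfl⟩)
    · exact hwM j
    · obtain ⟨_, ⟨j, rfl⟩, l, rfl⟩ := hs
      exact hvU j l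
    · exact hu0 l
    · exact hu1 l
  have hKU : KU ⊆ {y : Fin 3 → ℝ | c ≤ f y} := by
    unfold KU
    exact closure_minimal (convexHull_min hsub hconv) hclosed
  exact hKU hx

lemma comb_ge {A B h X Y : ℝ} (hA : 0 ≤ A) (hB : 0 ≤ B) (hAB : A + B = 1)
    (hX : h ≤ X) (hY : h ≤ Y) : h ≤ A * X + B * Y := by
  have h1 : A * h ≤ A * X := mul_le_mul_of_nonneg_left hX hA
  have h2 : B * h ≤ B * Y := mul_le_mul_of_nonneg_left hY hB
  have h3 : A * h + B * h = h := by rw [← add_mul, hAB, one_mul]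
  linarith

lemma vU_decomp (α β γ : ℝ) (j l : ℕ) :
    α * vU j l 0 + β * vU j l 1 + γ * vU j l 2 =
      (1 / ((j:ℝ)+1)^3) * (α * (wM j 0 + wP l 0) + β * (wM j 1 + wP l 1) + γ * (wM j 2 + wP l 2))
      + ((((j:ℝ)+1)^3 - 1) / ((j:ℝ)+1)^3) *
        (α * (wM j 0 + wP (l+1) 0) + β * (wM j 1 + wP (l+1) 1) + γ * (wM j 2 + wP (l+1) 2)) := by
  simp only [vU_apply]; ring

lemma Jfacts (j : ℕ) : 0 ≤ 1 / ((j:ℝ)+1)^3 ∧ 0 ≤ (((j:ℝ)+1)^3 - 1) / ((j:ℝ)+1)^3 ∧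
    1 / ((j:ℝ)+1)^3 + (((j:ℝ)+1)^3 - 1) / ((j:ℝ)+1)^3 = 1 := by
  have hj : (1:ℝ) ≤ (j:ℝ) + 1 := by linarith [Nat.cast_nonneg (α := ℝ) j]
  have hJ : (1:ℝ) ≤ ((j:ℝ)+1)^3 := one_le_pow₀ hj
  have hJ0 : (0:ℝ) < ((j:ℝ)+1)^3 := by linarith
  refine ⟨by positivity, div_nonneg (by linarith) (by linarith), ?_⟩
  field_simp
  ring

lemma L1 (κ : ℕ) (μ : ℝ) (hμ0 : 0 ≤ μ) (hμ1 : μ ≤ 1) :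
    ∀ x ∈ KU, hfun κ κ ≤ x 0 - ((κ:ℝ)+1) * x 1 - μ * x 2 := by
  have hκ : (0:ℝ) ≤ (κ:ℝ) := Nat.cast_nonneg κ
  have hmain := KU_halfspace 1 (-((κ:ℝ)+1)) (-μ) (hfun κ κ) ?_ ?_ ?_ ?_
  · intro x hx; have := hmain x hx; linarith
  · -- wM
    intro j
    simp only [wM0, wM1, wM2]
    have h1 : μ * S3 j ≤ S3 j := by nlinarith [S3_nonneg j]
    nlinarith [S3_le_S2 j, S2_nonneg j, hfun_nonpos_self κ, mul_nonneg hκ (S2_nonneg j)]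
  · -- vU
    intro j l
    obtain ⟨hA, hB, hAB⟩ := Jfacts j
    rw [vU_decomp]
    apply comb_ge hA hB hAB
    · simp only [wM0, wM1, wM2, wP0, wP1, wP2]
      have h1 : μ * S3 j ≤ S3 j := by nlinarith [S3_nonneg j]
      have h2 := hfun_min κ l
      unfold hfun at h2 ⊢
      nlinarith [S3_le_S2 j, S2_nonneg j, mul_nonneg hκ (S2_nonneg j)]
    · simp only [wM0, wM1, wM2, wP0, wP1, wP2]
      have h1 : μ * S3 j ≤ S3 j := by nlinarith [S3_nonneg j]
      have h2 := hfun_min κ (l+1)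
      unfold hfun at h2 ⊢
      nlinarith [S3_le_S2 j, S2_nonneg j, mul_nonneg hκ (S2_nonneg j)]
  · -- uZero
    intro l
    simp only [Pi.sub_apply, uZero0, uZero1, uZero2, wP0, wP1, wP2]
    nlinarith [S2_le_zeta2 l, S3_nonneg l, hfun_nonpos_self κ,
      mul_nonneg hκ (S3_nonneg l)]
  · -- uOne
    intro l
    simp only [Pi.sub_apply, uOne0, uOne1, uOne2, wP0, wP1, wP2]
    have h1 : μ * zeta3 ≤ zeta3 := by nlinarith [zeta3_pos]
    nlinarith [S2_le_zeta2 l, S3_nonneg l, hfun_nonpos_self κ,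
      mul_nonneg hκ (S3_nonneg l), zeta3_le_zeta2, zeta2_le_two]

lemma L2 (k : ℕ) (hk : 1 ≤ k) :
    ∀ x ∈ KU, x 0 - ((k:ℝ)+1) * x 1 ≤ zeta2 + 2*((k:ℝ)+1) - hfun k k := by
  have hκ : (0:ℝ) ≤ (k:ℝ) := Nat.cast_nonneg k
  have hS2two : ∀ j : ℕ, S2 j ≤ 2 := fun j => le_trans (S2_le_zeta2 j) zeta2_le_two
  have hmain := KU_halfspace (-1) ((k:ℝ)+1) 0 (-(zeta2 + 2*((k:ℝ)+1) - hfun k k)) ?_ ?_ ?_ ?_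
  · intro x hx; have := hmain x hx; linarith
  · intro j
    simp only [wM0, wM1, wM2]
    nlinarith [hS2two j, hfun_nonpos_self k, zeta2_nonneg,
      mul_le_mul_of_nonneg_left (hS2two j) (by linarith : (0:ℝ) ≤ (k:ℝ)+1)]
  · intro j l
    obtain ⟨hA, hB, hAB⟩ := Jfacts j
    rw [vU_decomp]
    apply comb_ge hA hB hAB
    · simp only [wM0, wM1, wM2, wP0, wP1, wP2]
      have h2 := hfun_nonpos k l hk
      unfold hfun at h2
      nlinarith [hfun_nonpos_self k, zeta2_nonneg,
        mul_le_mul_of_nonneg_left (hS2two j) (by linarith : (0:ℝ) ≤ (k:ℝ)+1)]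
    · simp only [wM0, wM1, wM2, wP0, wP1, wP2]
      have h2 := hfun_nonpos k (l+1) hk
      unfold hfun at h2
      nlinarith [hfun_nonpos_self k, zeta2_nonneg,
        mul_le_mul_of_nonneg_left (hS2two j) (by linarith : (0:ℝ) ≤ (k:ℝ)+1)]
  · intro l
    simp only [Pi.sub_apply, uZero0, uZero1, uZero2, wP0, wP1, wP2]
    have h2 := hfun_min k l
    unfold hfun at h2 ⊢
    linarith
  · intro l
    simp only [Pi.sub_apply, uOne0, uOne1, uOne2, wP0, wP1, wP2]
    have h2 := hfun_min k l
    unfold hfun at h2 ⊢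
    linarith

lemma L3 : ∀ x ∈ KU, 0 ≤ x 2 := by
  have hmain := KU_halfspace 0 0 1 0 ?_ ?_ ?_ ?_
  · intro x hx; have := hmain x hx; linarith
  · intro j; simp only [wM0, wM1, wM2]; nlinarith [S3_nonneg j]
  · intro j l
    obtain ⟨hA, hB, hAB⟩ := Jfacts j
    rw [vU_decomp]
    apply comb_ge hA hB hAB
    · simp only [wM0, wM1, wM2, wP0, wP1, wP2]; nlinarith [S3_nonneg j]
    · simp only [wM0, wM1, wM2, wP0, wP1, wP2]; nlinarith [S3_nonneg j]
  · intro l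
    simp only [Pi.sub_apply, uZero0, uZero1, uZero2, wP0, wP1, wP2]; norm_num
  · intro l
    simp only [Pi.sub_apply, uOne0, uOne1, uOne2, wP0, wP1, wP2]
    nlinarith [zeta3_pos]

lemma KU_convex : Convex ℝ KU := by
  unfold KU; exact (convex_convexHull ℝ _).closure

lemma vU_mem_KU (j l : ℕ) : vU j l ∈ KU := by
  unfold KU
  apply subset_closure
  apply subset_convexHull
  simp only [Set.mem_union, Set.mem_iUnion, Set.mem_range]
  exact Or.inl (Or.inl (Or.inr ⟨j, l, rfl⟩))

lemma u0_mem_KU (l : ℕ) : uZero - wP l ∈ KU := by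
  unfold KU
  apply subset_closure
  apply subset_convexHull
  simp only [Set.mem_union, Set.mem_iUnion, Set.mem_range]
  exact Or.inl (Or.inr ⟨l, rfl⟩)

lemma u1_mem_KU (l : ℕ) : uOne - wP l ∈ KU := by
  unfold KU
  apply subset_closure
  apply subset_convexHull
  simp only [Set.mem_union, Set.mem_iUnion, Set.mem_range]
  exact Or.inr ⟨l, rfl⟩

lemma vU_zero_eq (l : ℕ) : vU 0 l = wP l := by
  funext i
  rw [vU_apply]
  fin_cases i <;>
    norm_num [wM, wP, S2_zero, S3_zero]

lemma wP_mem_KU (l : ℕ) : wP l ∈ KU := by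
  rw [← vU_zero_eq l]; exact vU_mem_KU 0 l


set_option maxHeartbeats 2000000 in
/-- **Lemma (intersection `A ∩ C_k` is a segment).** For every positive integer
`m` there is `ε₀ > 0` such that for every `0 < δ < ε₀` and every `k ∈ {1, …, m}`,
the translate of `K` by `(0,0,−δ)` meets the translate of `K` by
`w₊(k) + w₊(k+1) − u₁` exactly in the translated edge
`E_k + (0,0,−δ) = segment [w₊(k), w₊(k+1)] + (0,0,−δ)`. -/
theorem A_inter_Ck_is_edge (m : ℕ) (hm : 0 < m) :
    ∃ ε₀ : ℝ, 0 < ε₀ ∧ ∀ δ : ℝ, 0 < δ → δ < ε₀ →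
      ∀ k : ℕ, 1 ≤ k → k ≤ m →
        (![(0 : ℝ), 0, -δ] +ᵥ KU) ∩ ((wP k + wP (k + 1) - uOne) +ᵥ KU) =
          ![(0 : ℝ), 0, -δ] +ᵥ segment ℝ (wP k) (wP (k + 1)) := by
  refine ⟨zeta3, zeta3_pos, ?_⟩
  intro δ hδ0 hδε k hk1 hkm
  cases k with
  | zero => omega
  | succ n =>
  rw [show n + 1 + 1 = n + 2 from rfl]
  set a : Fin 3 → ℝ := ![(0 : ℝ), 0, -δ] with ha
  set c : Fin 3 → ℝ := wP (n+1) + wP (n+2) - uOne with hc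
  have ha0 : a 0 = 0 := rfl
  have ha1 : a 1 = 0 := rfl
  have ha2 : a 2 = -δ := rfl
  have hc0 : c 0 = S2 (n+1) + S2 (n+2) - zeta2 := by
    rw [hc]; show wP (n+1) 0 + wP (n+2) 0 - uOne 0 = _
    rw [wP0, wP0, uOne0]
  have hc1 : c 1 = S3 (n+1) + S3 (n+2) + 2 := by
    rw [hc]; show wP (n+1) 1 + wP (n+2) 1 - uOne 1 = _
    rw [wP1, wP1, uOne1]; ring
  have hc2 : c 2 = -zeta3 := by
    rw [hc]; show wP (n+1) 2 + wP (n+2) 2 - uOne 2 = _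
    rw [wP2, wP2, uOne2]; ring
  ext x
  constructor
  · rintro ⟨hxA, hxC⟩
    obtain ⟨p, hp, hpx⟩ := Set.mem_vadd_set.mp hxA
    obtain ⟨q, hq, hqx⟩ := Set.mem_vadd_set.mp hxC
    have hpx' : a + p = x := hpx
    have hqx' : c + q = x := hqx
    have hxp : ∀ i, x i = a i + p i := fun i => by rw [← hpx']; rfl
    have hxq : ∀ i, x i = c i + q i := fun i => by rw [← hqx']; rfl
    have hL1a := L1 (n+1) 0 le_rfl zero_le_one p hp
    have hL1b := L1 (n+1) 1 zero_le_one le_rfl p hp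
    have hL1c := L1 n 0 le_rfl zero_le_one p hp
    have hL1d := L1 (n+2) 0 le_rfl zero_le_one p hp
    have hL2q := L2 (n+1) (by omega) q hq
    have hzp := L3 p hp
    simp only [hfun] at hL1a hL1b hL1c hL1d hL2q
    push_cast at hL1a hL1b hL1c hL1d hL2q
    have htie1 : S2 (n+2) - ((n:ℝ)+2) * S3 (n+2) = S2 (n+1) - ((n:ℝ)+2) * S3 (n+1) := by
      have h := hfun_tie (n+1)
      simp only [hfun] at h
      push_cast at h
      convert h using 2 <;> push_cast <;> ring
    have htie0 : S2 (n+1) - ((n:ℝ)+1) * S3 (n+1) = S2 n - ((n:ℝ)+1) * S3 n := by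
      have h := hfun_tie n
      simp only [hfun] at h
      push_cast at h
      convert h using 2 <;> push_cast <;> ring
    have hxpe0 := hxp 0; have hxpe1 := hxp 1
    have hxqe0 := hxq 0; have hxqe1 := hxq 1
    rw [ha0] at hxpe0; rw [ha1] at hxpe1
    rw [hc0] at hxqe0; rw [hc1] at hxqe1
    have hp1q : p 1 = S3 (n+1) + S3 (n+2) + 2 + q 1 := by linarith
    have hp1q' : ((n:ℝ)+2) * p 1 = ((n:ℝ)+2) * (S3 (n+1) + S3 (n+2) + 2 + q 1) := by
      rw [hp1q]
    have heq : p 0 - ((n:ℝ)+2) * p 1 = S2 (n+1) - ((n:ℝ)+2) * S3 (n+1) := by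
      apply le_antisymm
      · nlinarith [hp1q', hL2q, hxpe0, hxqe0, htie1]
      · nlinarith [hL1a]
    have hp2 : p 2 = 0 := by
      apply le_antisymm
      · nlinarith [hL1b, heq]
      · exact hzp
    have hlow : S2 (n+1) ≤ p 0 := by
      have h1 : ((n:ℝ)+2) * (S2 n - ((n:ℝ)+1) * S3 n) ≤ ((n:ℝ)+2) * (p 0 - ((n:ℝ)+1) * p 1) :=
        mul_le_mul_of_nonneg_left (by nlinarith [hL1c]) (by positivity)
      have h2 : ((n:ℝ)+1) * (p 0 - ((n:ℝ)+2) * p 1)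
          = ((n:ℝ)+1) * (S2 (n+1) - ((n:ℝ)+2) * S3 (n+1)) := by rw [heq]
      have h3 : ((n:ℝ)+2) * (S2 (n+1) - ((n:ℝ)+1) * S3 (n+1))
          = ((n:ℝ)+2) * (S2 n - ((n:ℝ)+1) * S3 n) := by rw [htie0]
      nlinarith [h1, h2, h3]
    have hhigh : p 0 ≤ S2 (n+2) := by
      have h1 : ((n:ℝ)+2) * (S2 (n+2) - ((n:ℝ)+3) * S3 (n+2)) ≤ ((n:ℝ)+2) * (p 0 - ((n:ℝ)+3) * p 1) :=
        mul_le_mul_of_nonneg_left (by nlinarith [hL1d]) (by positivity)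
      have h2 : ((n:ℝ)+3) * (p 0 - ((n:ℝ)+2) * p 1)
          = ((n:ℝ)+3) * (S2 (n+1) - ((n:ℝ)+2) * S3 (n+1)) := by rw [heq]
      have h3 : ((n:ℝ)+3) * (S2 (n+1) - ((n:ℝ)+2) * S3 (n+1))
          = ((n:ℝ)+3) * (S2 (n+2) - ((n:ℝ)+2) * S3 (n+2)) := by rw [htie1]
      nlinarith [h1, h2, h3]
    have a2 : S2 (n+2) = S2 (n+1) + 1/((n:ℝ)+2)^2 := by
      have h := S2_succ (n+1); push_cast at h; convert h using 3 <;> push_cast <;> ring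
    have a3 : S3 (n+2) = S3 (n+1) + 1/((n:ℝ)+2)^3 := by
      have h := S3_succ (n+1); push_cast at h; convert h using 3 <;> push_cast <;> ring
    have hN2 : (0:ℝ) < (n:ℝ) + 2 := by positivity
    set t : ℝ := (p 0 - S2 (n+1)) * ((n:ℝ)+2)^2 with hT
    have ht0 : 0 ≤ t := mul_nonneg (by linarith) (by positivity)
    have hti : t * (1/((n:ℝ)+2)^2) = p 0 - S2 (n+1) := by
      rw [hT]; field_simp
    have ht1 : t ≤ 1 := by
      have hd : p 0 - S2 (n+1) ≤ 1/((n:ℝ)+2)^2 := by linarith [a2]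
      calc t ≤ (1/((n:ℝ)+2)^2) * ((n:ℝ)+2)^2 := by
              rw [hT]; exact mul_le_mul_of_nonneg_right hd (by positivity)
      _ = 1 := by field_simp
    refine Set.mem_vadd_set.mpr ⟨p, ⟨1 - t, t, by linarith, ht0, by ring, ?_⟩, hpx⟩
    have e0 : ((1 - t) • wP (n+1) + t • wP (n+2)) 0 = p 0 := by
      simp only [Pi.add_apply, Pi.smul_apply, smul_eq_mul, wP0]
      rw [a2]
      nlinarith [hti]
    have e1 : ((1 - t) • wP (n+1) + t • wP (n+2)) 1 = p 1 := by
      simp only [Pi.add_apply, Pi.smul_apply, smul_eq_mul, wP1]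
      have key : ((n:ℝ)+2) * ((1-t) * S3 (n+1) + t * S3 (n+2)) = ((n:ℝ)+2) * p 1 := by
        have e1' : ((n:ℝ)+2) * p 1 = p 0 - (S2 (n+1) - ((n:ℝ)+2) * S3 (n+1)) := by
          linarith [heq]
        rw [e1', a3]
        have e2' : ((n:ℝ)+2) * ((1-t) * S3 (n+1) + t * (S3 (n+1) + 1/((n:ℝ)+2)^3))
            = ((n:ℝ)+2) * S3 (n+1) + t * (1/((n:ℝ)+2)^2) := by
          field_simp
          ring
        rw [e2', hti]
        ring
      exact mul_left_cancel₀ (ne_of_gt hN2) key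
    have e2 : ((1 - t) • wP (n+1) + t • wP (n+2)) 2 = p 2 := by
      simp only [Pi.add_apply, Pi.smul_apply, smul_eq_mul, wP2]
      rw [hp2]; ring
    funext i
    fin_cases i
    · exact e0
    · exact e1
    · exact e2
  · intro hx
    obtain ⟨p, hpseg, hpx⟩ := Set.mem_vadd_set.mp hx
    obtain ⟨s, t, hs, ht, hst, hcomb⟩ := hpseg
    have hs' : s = 1 - t := by linarith
    subst hs'
    constructor
    · exact Set.mem_vadd_set.mpr ⟨p,
        (KU_convex.segment_subset (wP_mem_KU (n+1)) (wP_mem_KU (n+2))) ⟨1 - t, t, hs, ht, hst, hcomb⟩,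
        hpx⟩
    · have hζ : (0:ℝ) < zeta3 := zeta3_pos
      have hζ' : zeta3 ≠ 0 := ne_of_gt hζ
      have hδζ0 : 0 ≤ δ / zeta3 := by positivity
      have hδζ1 : δ / zeta3 ≤ 1 := by rw [div_le_one hζ]; linarith
      have hr : ∀ l : ℕ,
          ((1 - δ/zeta3) • (uOne - wP l) + (δ/zeta3) • (uZero - wP l)) ∈ KU := fun l =>
        KU_convex (u1_mem_KU l) (u0_mem_KU l) (by linarith) hδζ0 (by ring)
      have hyK : ((1 - t) • ((1 - δ/zeta3) • (uOne - wP (n+2)) + (δ/zeta3) • (uZero - wP (n+2)))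
          + t • ((1 - δ/zeta3) • (uOne - wP (n+1)) + (δ/zeta3) • (uZero - wP (n+1)))) ∈ KU :=
        KU_convex (hr (n+2)) (hr (n+1)) hs ht hst
      refine Set.mem_vadd_set.mpr ⟨_, hyK, ?_⟩
      have hgoal : ∀ i : Fin 3,
          (c + ((1 - t) • ((1 - δ/zeta3) • (uOne - wP (n+2)) + (δ/zeta3) • (uZero - wP (n+2)))
          + t • ((1 - δ/zeta3) • (uOne - wP (n+1)) + (δ/zeta3) • (uZero - wP (n+1))))) i
          = (a + ((1 - t) • wP (n+1) + t • wP (n+2))) i := by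
        have g0 : (c + ((1 - t) • ((1 - δ/zeta3) • (uOne - wP (n+2)) + (δ/zeta3) • (uZero - wP (n+2)))
            + t • ((1 - δ/zeta3) • (uOne - wP (n+1)) + (δ/zeta3) • (uZero - wP (n+1))))) 0
            = (a + ((1 - t) • wP (n+1) + t • wP (n+2))) 0 := by
          simp only [Pi.add_apply, Pi.smul_apply, Pi.sub_apply, smul_eq_mul,
            hc0, ha0, wP0, uOne0, uZero0]
          field_simp
          ring
        have g1 : (c + ((1 - t) • ((1 - δ/zeta3) • (uOne - wP (n+2)) + (δ/zeta3) • (uZero - wP (n+2)))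
            + t • ((1 - δ/zeta3) • (uOne - wP (n+1)) + (δ/zeta3) • (uZero - wP (n+1))))) 1
            = (a + ((1 - t) • wP (n+1) + t • wP (n+2))) 1 := by
          simp only [Pi.add_apply, Pi.smul_apply, Pi.sub_apply, smul_eq_mul,
            hc1, ha1, wP1, uOne1, uZero1]
          field_simp
          ring
        have g2 : (c + ((1 - t) • ((1 - δ/zeta3) • (uOne - wP (n+2)) + (δ/zeta3) • (uZero - wP (n+2)))
            + t • ((1 - δ/zeta3) • (uOne - wP (n+1)) + (δ/zeta3) • (uZero - wP (n+1))))) 2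
            = (a + ((1 - t) • wP (n+1) + t • wP (n+2))) 2 := by
          simp only [Pi.add_apply, Pi.smul_apply, Pi.sub_apply, smul_eq_mul,
            hc2, ha2, wP2, uOne2, uZero2]
          field_simp
          ring
        intro i
        fin_cases i
        · exact g0
        · exact g1
        · exact g2
      show c + _ = x
      rw [← hpx, ← hcomb]
      exact funext hgoal
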